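/- In a σ-sequential effect algebra, if b ∘ a = 0 then b ∘ ⌈a⌉ = 0, where ⌈a⌉ = (⋀ₙ (a⊥)ⁿ)⊥ is the smallest sharp element above a. -/
import Mathlib


/-- `x ≤ y` for a partially defined addition: there is `c` with `x + c` defined and `x + c = y`. -/
def pLe {E : Type*} (D : E → E → Prop) (add : E → E → E) (x y : E) : Prop :=
  ∃ c, D x c ∧ add x c = y

/-- An effect algebra: a partially defined commutative associative addition with zero,
the zero-one law and unique complements. `D a b` means "`a + b` is defined". -/
structure EffectAlgebra (E : Type*) where
  D : E → E → Prop
  add : E → E → E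
  zero : E
  one : E
  compl : E → E
  D_comm : ∀ {a b}, D a b → D b a
  add_comm' : ∀ {a b}, D a b → add a b = add b a
  D_assoc_left : ∀ {a b c}, D b c → D a (add b c) → D a b
  D_assoc : ∀ {a b c}, D b c → D a (add b c) → D (add a b) c
  add_assoc' : ∀ {a b c}, D b c → D a (add b c) → add a (add b c) = add (add a b) c
  D_zero : ∀ a, D a zero
  add_zero' : ∀ a, add a zero = a
  zero_one : ∀ {a}, D a one → a = zero
  D_compl : ∀ a, D a (compl a)
  add_compl : ∀ a, add a (compl a) = one
  compl_unique : ∀ {a b}, D a b → add a b = one → b = compl a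

namespace EffectAlgebra
variable {E : Type*} (EA : EffectAlgebra E)
/-- The canonical order of an effect algebra. -/
def le (a b : E) : Prop := pLe EA.D EA.add a b
end EffectAlgebra

/-- A sequential effect algebra (Gudder–Greechie): an effect algebra with a total
binary operation `seq` (the sequential product) satisfying the five axioms. -/
structure SEA (E : Type*) extends EffectAlgebra E where
  seq : E → E → E
  seq_D : ∀ {b c} (a : E), D b c → D (seq a b) (seq a c)
  seq_add : ∀ {b c} (a : E), D b c → seq a (add b c) = add (seq a b) (seq a c)
  one_seq : ∀ a, seq one a = a
  seq_orth : ∀ {a b}, seq a b = zero → seq b a = zero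
  seq_compl : ∀ {a b}, seq a b = seq b a → seq a (compl b) = seq (compl b) a
  seq_assoc : ∀ {a b}, seq a b = seq b a → ∀ c, seq a (seq b c) = seq (seq a b) c
  comm_seq : ∀ {a b c}, seq c a = seq a c → seq c b = seq b c →
    seq c (seq a b) = seq (seq a b) c
  comm_add : ∀ {a b c}, seq c a = seq a c → seq c b = seq b c → D a b →
    seq c (add a b) = seq (add a b) c

namespace SEA
variable {E : Type*} (SE : SEA E)
/-- The order of the underlying effect algebra. -/
def le (a b : E) : Prop := pLe SE.D SE.add a b
end SEA

/-- A σ-sequential effect algebra: decreasing sequences have infima (given by `inf`),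
preserved by left sequential multiplication, and commutation is stable under them. -/
structure SigmaSEA (E : Type*) extends SEA E where
  inf : (ℕ → E) → E
  inf_le : ∀ {f : ℕ → E}, (∀ n, pLe D add (f (n + 1)) (f n)) →
    ∀ n, pLe D add (inf f) (f n)
  le_inf : ∀ {f : ℕ → E}, (∀ n, pLe D add (f (n + 1)) (f n)) →
    ∀ x, (∀ n, pLe D add x (f n)) → pLe D add x (inf f)
  seq_inf : ∀ {f : ℕ → E} (b : E), (∀ n, pLe D add (f (n + 1)) (f n)) →
    seq b (inf f) = inf (fun n => seq b (f n))
  comm_inf : ∀ {f : ℕ → E} {b : E}, (∀ n, pLe D add (f (n + 1)) (f n)) →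
    (∀ n, seq b (f n) = seq (f n) b) → seq b (inf f) = seq (inf f) b

namespace SigmaSEA
variable {E : Type*} (SE : SigmaSEA E)

/-- `SE.pow a n` is the `n`-fold sequential product `a ∘ (a ∘ (⋯ ∘ a))`. -/
def pow (a : E) : ℕ → E
  | 0 => SE.one
  | n + 1 => SE.seq a (pow a n)

/-- The floor `⌊a⌋ = ⋀ₙ aⁿ`, the largest sharp element below `a`. -/
def floor (a : E) : E := SE.inf fun n => SE.pow a (n + 1)

/-- The ceiling `⌈a⌉ = ⌊a⊥⌋⊥`, the smallest sharp element above `a`. -/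
def ceil (a : E) : E := SE.compl (SE.floor (SE.compl a))

/-! ### Auxiliary lemmas -/

lemma pLe_refl (x : E) : pLe SE.D SE.add x x :=
  ⟨SE.zero, SE.D_zero x, SE.add_zero' x⟩

lemma D_right {a b c : E} (hab : SE.D a b) (h : SE.D (SE.add a b) c) : SE.D b c := by
  have h1 : SE.D c (SE.add a b) := SE.D_comm h
  rw [SE.add_comm' hab] at h1
  exact SE.D_comm (SE.D_assoc_left (SE.D_comm hab) h1)

lemma D_left' {a b c : E} (hab : SE.D a b) (h : SE.D (SE.add a b) c) :
    SE.D a (SE.add b c) := by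
  have hbc := SE.D_right hab h
  have h1 : SE.D c (SE.add b a) := by rw [← SE.add_comm' hab]; exact SE.D_comm h
  have h2 : SE.D (SE.add c b) a := SE.D_assoc (SE.D_comm hab) h1
  have h3 := SE.D_comm h2
  rwa [SE.add_comm' (SE.D_comm hbc)] at h3

lemma add_compl_eq {a b : E} (hab : SE.D a b) (hd : SE.D (SE.add a b) (SE.compl (SE.add a b))) :
    SE.add a (SE.compl (SE.add a b)) = SE.compl b ∧ SE.D a (SE.compl (SE.add a b)) := by
  set d := SE.compl (SE.add a b) with hd'
  have h1 : SE.add (SE.add a b) d = SE.one := SE.add_compl _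
  have hbd : SE.D b d := SE.D_right hab hd
  have habd : SE.D a (SE.add b d) := SE.D_left' hab hd
  have e1 : SE.add a (SE.add b d) = SE.one := by rw [SE.add_assoc' hbd habd]; exact h1
  have hdb := SE.D_comm hbd
  have h2 : SE.D a (SE.add d b) := by rwa [SE.add_comm' hdb]
  have h3 : SE.D (SE.add a d) b := SE.D_assoc hdb h2
  have had : SE.D a d := SE.D_assoc_left hdb h2
  have e3 : SE.add b (SE.add a d) = SE.one := by
    rw [SE.add_comm' (SE.D_comm h3), ← SE.add_assoc' hdb h2, SE.add_comm' hdb]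
    exact e1
  exact ⟨SE.compl_unique (SE.D_comm h3) e3, had⟩

lemma compl_compl (b : E) : SE.compl (SE.compl b) = b :=
  (SE.compl_unique (SE.D_comm (SE.D_compl b))
    (by rw [SE.add_comm' (SE.D_comm (SE.D_compl b))]; exact SE.add_compl b)).symm

lemma cancel {a b c : E} (hb : SE.D a b) (hc : SE.D a c) (h : SE.add a b = SE.add a c) :
    b = c := by
  have e1 := (SE.add_compl_eq hb (SE.D_compl (SE.add a b))).1
  have e2 := (SE.add_compl_eq hc (SE.D_compl (SE.add a c))).1
  rw [← h] at e2
  have : SE.compl b = SE.compl c := by rw [← e1, ← e2]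
  have := congrArg SE.compl this
  rwa [SE.compl_compl, SE.compl_compl] at this

lemma eq_zero_of_add_eq_zero {c d : E} (hcd : SE.D c d) (hz : SE.add c d = SE.zero) :
    d = SE.zero := by
  have h01 : SE.D SE.zero SE.one := SE.D_comm (SE.D_zero SE.one)
  rw [← hz] at h01
  exact SE.zero_one (SE.D_right hcd h01)

lemma pLe_antisymm {x y : E} (h1 : pLe SE.D SE.add x y) (h2 : pLe SE.D SE.add y x) :
    x = y := by
  obtain ⟨c, hc, hcx⟩ := h1
  obtain ⟨d, hd, hdx⟩ := h2
  rw [← hcx] at hd hdx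
  have hcd : SE.D c d := SE.D_right hc hd
  have hx : SE.D x (SE.add c d) := SE.D_left' hc hd
  have he : SE.add x (SE.add c d) = SE.add x SE.zero := by
    rw [SE.add_assoc' hcd hx, hdx, SE.add_zero']
  have h0 : SE.add c d = SE.zero := SE.cancel hx (SE.D_zero x) he
  have hd0 : d = SE.zero := SE.eq_zero_of_add_eq_zero hcd h0
  have hc0 : c = SE.zero := by rwa [hd0, SE.add_zero'] at h0
  rw [← hcx, hc0, SE.add_zero']

lemma seq_zero (x : E) : SE.seq x SE.zero = SE.zero := by
  have h := SE.seq_add x (SE.D_zero SE.zero)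
  rw [SE.add_zero'] at h
  have hD : SE.D (SE.seq x SE.zero) (SE.seq x SE.zero) := SE.seq_D x (SE.D_zero SE.zero)
  exact SE.cancel hD (SE.D_zero _) (by rw [← h, SE.add_zero'])

lemma compl_zero : SE.compl SE.zero = SE.one :=
  (SE.compl_unique (SE.D_comm (SE.D_zero SE.one))
    (by rw [SE.add_comm' (SE.D_comm (SE.D_zero SE.one)), SE.add_zero'])).symm

lemma seq_one (x : E) : SE.seq x SE.one = x := by
  have hc : SE.seq x SE.zero = SE.seq SE.zero x := by
    rw [SE.seq_zero, SE.seq_orth (SE.seq_zero x)]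
  have := SE.seq_compl hc
  rw [SE.compl_zero] at this
  rw [this, SE.one_seq]

lemma seq_le (c a : E) : pLe SE.D SE.add (SE.seq c a) c :=
  ⟨SE.seq c (SE.compl a), SE.seq_D c (SE.D_compl a),
    by rw [← SE.seq_add c (SE.D_compl a), SE.add_compl, SE.seq_one]⟩

lemma comm_pow {x a : E} (h : SE.seq x a = SE.seq a x) (n : ℕ) :
    SE.seq x (SE.pow a n) = SE.seq (SE.pow a n) x := by
  induction n with
  | zero => simp only [pow]; rw [SE.seq_one, SE.one_seq]
  | succ n ih => simp only [pow]; exact SE.comm_seq h ih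

lemma pow_succ' (a : E) (n : ℕ) : SE.pow a (n + 1) = SE.seq (SE.pow a n) a := by
  induction n with
  | zero => simp only [pow]; rw [SE.seq_one, SE.one_seq]
  | succ n ih =>
    calc SE.pow a (n + 2) = SE.seq a (SE.seq (SE.pow a n) a) := by
            show SE.seq a (SE.pow a (n + 1)) = _; rw [ih]
      _ = SE.seq (SE.seq a (SE.pow a n)) a := SE.seq_assoc (SE.comm_pow rfl n) a
      _ = SE.seq (SE.pow a (n + 1)) a := rfl

lemma pow_decreasing (a : E) (n : ℕ) :
    pLe SE.D SE.add (SE.pow a (n + 2)) (SE.pow a (n + 1)) := by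
  rw [SE.pow_succ' a (n + 1)]
  exact SE.seq_le _ _

/-- In a σ-sequential effect algebra, if `b ∘ a = 0` then `b ∘ ⌈a⌉ = 0`. -/
theorem seq_ceil_eq_zero {E : Type*} (SE : SigmaSEA E) (a b : E)
    (h : SE.seq b a = SE.zero) : SE.seq b (SE.ceil a) = SE.zero := by
  have hab : SE.seq a b = SE.zero := SE.seq_orth h
  have hcomm : SE.seq b a = SE.seq a b := by rw [h, hab]
  have hcomm' : SE.seq b (SE.compl a) = SE.seq (SE.compl a) b := SE.seq_compl hcomm
  set a' := SE.compl a with ha'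
  -- b ∘ a⊥ = b
  have hba' : SE.seq b a' = b := by
    have e := SE.seq_add b (SE.D_compl a)
    rw [SE.add_compl, SE.seq_one, h] at e
    rw [SE.add_comm' (SE.D_comm (SE.D_zero _)), SE.add_zero'] at e
    exact e.symm
  -- b ∘ (a⊥)ⁿ = b
  have hpow : ∀ n, SE.seq b (SE.pow a' n) = b := by
    intro n
    induction n with
    | zero => exact SE.seq_one b
    | succ n ih =>
      rw [show SE.pow a' (n + 1) = SE.seq a' (SE.pow a' n) from rfl,
        SE.seq_assoc hcomm' (SE.pow a' n), hba', ih]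
  have hdec : ∀ n, pLe SE.D SE.add (SE.pow a' (n + 1 + 1)) (SE.pow a' (n + 1)) :=
    fun n => SE.pow_decreasing a' n
  -- b ∘ ⌊a⊥⌋ = b
  have hfloor : SE.seq b (SE.floor a') = b := by
    rw [SigmaSEA.floor, SE.seq_inf b hdec]
    have : (fun n => SE.seq b (SE.pow a' (n + 1))) = fun _ => b := funext fun n => hpow (n + 1)
    rw [this]
    exact SE.pLe_antisymm (SE.inf_le (fun n => SE.pLe_refl b) 0)
      (SE.le_inf (fun n => SE.pLe_refl b) b (fun n => SE.pLe_refl b))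
  -- conclude by cancellation
  have hD : SE.D (SE.seq b (SE.floor a')) (SE.seq b (SE.compl (SE.floor a'))) :=
    SE.seq_D b (SE.D_compl (SE.floor a'))
  rw [hfloor] at hD
  have e : SE.seq b SE.one =
      SE.add (SE.seq b (SE.floor a')) (SE.seq b (SE.compl (SE.floor a'))) := by
    rw [← SE.seq_add b (SE.D_compl _), SE.add_compl]
  rw [SE.seq_one, hfloor] at e
  have : SE.add b (SE.seq b (SE.compl (SE.floor a'))) = SE.add b SE.zero := by
    rw [← e, SE.add_zero']
  have h0 := SE.cancel hD (SE.D_zero b) this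
  rw [SigmaSEA.ceil, ← ha']
  exact h0

end SigmaSEA
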